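/- Fix μ̃ > 0, σ > 0, θ̃ ∈ ℝ, S₀ > 0 and T > 0, and define the XOU futures curve f(T) := exp( e^{−μ̃T}·ln S₀ + (1 − e^{−μ̃T})(θ̃ − σ²/(2μ̃)) + (σ²/(4μ̃))(1 − e^{−2μ̃T}) ). If ln S₀ > θ̃ − (σ²/(2μ̃))(1 − e^{−μ̃T}) + ( e^{2μ̃T}/4 + σ²/(2μ̃) )^{1/2} − e^{μ̃T}/2, then the first derivative of f at T is strictly negative and the second derivative of f at T is strictly positive (the futures curve is downward-sloping and convex at T). -/

import Mathlib

open Real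

/-- XOU futures term structure: downward-sloping and convex when ln S₀ exceeds the upper threshold. -/
theorem xou_term_structure_down_convex (μt θt σ S0 T : ℝ) (hμ : 0 < μt) (hσ : 0 < σ) (hS : 0 < S0)
    (hT : 0 < T) (f : ℝ → ℝ)
    (hf : f = fun T : ℝ => exp (exp (-μt * T) * log S0
      + (1 - exp (-μt * T)) * (θt - σ ^ 2 / (2 * μt))
      + σ ^ 2 / (4 * μt) * (1 - exp (-2 * μt * T))))
    (hln : θt - σ ^ 2 / (2 * μt) * (1 - exp (-μt * T)) + Real.sqrt (exp (2 * μt * T) / 4 + σ ^ 2 / (2 * μt)) - exp (μt * T) / 2 < log S0) :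
    deriv f T < 0 ∧ 0 < deriv (deriv f) T := by
  subst hf
  set L := Real.log S0 with hLdef
  set K := θt - σ ^ 2 / (2 * μt) with hKdef
  -- basic exponential derivatives
  have h1 : ∀ t : ℝ, HasDerivAt (fun t : ℝ => exp (-μt * t)) (exp (-μt * t) * (-μt)) t := by
    intro t
    have h : HasDerivAt (fun t : ℝ => -μt * t) (-μt) t := by
      simpa using (hasDerivAt_id t).const_mul (-μt)
    exact h.exp
  have h2 : ∀ t : ℝ, HasDerivAt (fun t : ℝ => exp (-2 * μt * t)) (exp (-2 * μt * t) * (-2 * μt)) t := by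
    intro t
    have h : HasDerivAt (fun t : ℝ => -2 * μt * t) (-2 * μt) t := by
      simpa using (hasDerivAt_id t).const_mul (-2 * μt)
    exact h.exp
  -- derivative of the exponent g
  have hg : ∀ t : ℝ, HasDerivAt
      (fun t : ℝ => exp (-μt * t) * L + (1 - exp (-μt * t)) * K
        + σ ^ 2 / (4 * μt) * (1 - exp (-2 * μt * t)))
      (μt * exp (-μt * t) * (K - L) + σ ^ 2 / 2 * exp (-2 * μt * t)) t := by
    intro t
    have := (((h1 t).mul_const L).add (((hasDerivAt_const t (1:ℝ)).sub (h1 t)).mul_const K)).add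
      (((hasDerivAt_const t (1:ℝ)).sub (h2 t)).const_mul (σ ^ 2 / (4 * μt)))
    refine this.congr_deriv ?_
    field_simp
    ring
  -- first derivative of f
  have hf' : ∀ t : ℝ, HasDerivAt
      (fun t : ℝ => exp (exp (-μt * t) * L + (1 - exp (-μt * t)) * K
        + σ ^ 2 / (4 * μt) * (1 - exp (-2 * μt * t))))
      (exp (exp (-μt * t) * L + (1 - exp (-μt * t)) * K
        + σ ^ 2 / (4 * μt) * (1 - exp (-2 * μt * t)))
        * (μt * exp (-μt * t) * (K - L) + σ ^ 2 / 2 * exp (-2 * μt * t))) t :=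
    fun t => (hg t).exp
  have hdf : deriv (fun t : ℝ => exp (exp (-μt * t) * L + (1 - exp (-μt * t)) * K
        + σ ^ 2 / (4 * μt) * (1 - exp (-2 * μt * t))))
      = fun t : ℝ => exp (exp (-μt * t) * L + (1 - exp (-μt * t)) * K
        + σ ^ 2 / (4 * μt) * (1 - exp (-2 * μt * t)))
        * (μt * exp (-μt * t) * (K - L) + σ ^ 2 / 2 * exp (-2 * μt * t)) :=
    funext fun t => (hf' t).deriv
  -- derivative of d
  have hd : ∀ t : ℝ, HasDerivAt
      (fun t : ℝ => μt * exp (-μt * t) * (K - L) + σ ^ 2 / 2 * exp (-2 * μt * t))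
      (μt ^ 2 * exp (-μt * t) * (L - K) - σ ^ 2 * μt * exp (-2 * μt * t)) t := by
    intro t
    have := (((h1 t).const_mul μt).mul_const (K - L)).add ((h2 t).const_mul (σ ^ 2 / 2))
    refine this.congr_deriv ?_
    ring
  -- second derivative of f at T
  have hf2 : HasDerivAt (fun t : ℝ => exp (exp (-μt * t) * L + (1 - exp (-μt * t)) * K
        + σ ^ 2 / (4 * μt) * (1 - exp (-2 * μt * t)))
        * (μt * exp (-μt * t) * (K - L) + σ ^ 2 / 2 * exp (-2 * μt * t)))
      (exp (exp (-μt * T) * L + (1 - exp (-μt * T)) * K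
        + σ ^ 2 / (4 * μt) * (1 - exp (-2 * μt * T)))
        * (μt * exp (-μt * T) * (K - L) + σ ^ 2 / 2 * exp (-2 * μt * T))
        * (μt * exp (-μt * T) * (K - L) + σ ^ 2 / 2 * exp (-2 * μt * T))
        + exp (exp (-μt * T) * L + (1 - exp (-μt * T)) * K
        + σ ^ 2 / (4 * μt) * (1 - exp (-2 * μt * T)))
        * (μt ^ 2 * exp (-μt * T) * (L - K) - σ ^ 2 * μt * exp (-2 * μt * T))) T :=
    (hf' T).mul (hd T)
  -- abbreviations for the inequality work
  set w := exp (-μt * T) with hw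
  set E := exp (μt * T) with hE
  have hwpos : 0 < w := exp_pos _
  have hEpos : 0 < E := exp_pos _
  have hwE : w * E = 1 := by
    rw [hw, hE, ← exp_add]; simp
  have hw2 : exp (-2 * μt * T) = w ^ 2 := by
    rw [hw, sq, ← exp_add]; ring_nf
  have hE2 : exp (2 * μt * T) = E ^ 2 := by
    rw [hE, sq, ← exp_add]; ring_nf
  set D := σ ^ 2 / (2 * μt) with hD
  have hDpos : 0 < D := by positivity
  set s := Real.sqrt (exp (2 * μt * T) / 4 + D) with hs
  have hs0 : 0 ≤ s := Real.sqrt_nonneg _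
  have hs2 : s ^ 2 = E ^ 2 / 4 + D := by
    rw [hs, sq, Real.mul_self_sqrt (by positivity), hE2]
  set x := L - K - D * w with hx
  -- hypothesis hln says: x > s - E/2
  have hxlb : s - E / 2 < x := by
    have h0 : θt - D * (1 - w) = K + D * w := by rw [hKdef]; ring
    rw [hx]; linarith
  have hxpos : 0 < x := by
    nlinarith [hs2, hs0, hEpos, hDpos]
  -- key quadratic inequality: x² + E x - D > 0
  have hquad : 0 < x ^ 2 + E * x - D := by
    nlinarith [hs2, hs0, hEpos, hxlb]
  have hd1 : μt * w * (K - L) + σ ^ 2 / 2 * w ^ 2 = -(μt * w * x) := by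
    rw [hx, hD]; field_simp; ring
  have hd2 : μt ^ 2 * w * (L - K) - σ ^ 2 * μt * w ^ 2 = μt ^ 2 * w * (x - D * w) := by
    rw [hx, hD]; field_simp; ring
  clear_value w E D s x
  constructor
  · rw [hdf]
    beta_reduce
    rw [hw2, ← hw, hd1]
    have hpx : 0 < μt * w * x := mul_pos (mul_pos hμ hwpos) hxpos
    have he : 0 < exp (w * L + (1 - w) * K + σ ^ 2 / (4 * μt) * (1 - w ^ 2)) := exp_pos _
    exact mul_neg_of_pos_of_neg he (by linarith)
  · rw [hdf, hf2.deriv, hw2, hd1, hd2]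
    have he : 0 < exp (w * L + (1 - w) * K + σ ^ 2 / (4 * μt) * (1 - w ^ 2)) := exp_pos _
    set G := exp (w * L + (1 - w) * K + σ ^ 2 / (4 * μt) * (1 - w ^ 2)) with hG
    clear_value G
    have hsum : 0 < w * x ^ 2 + x - D * w := by
      have h := mul_pos hwpos hquad
      have h2 : w * (x ^ 2 + E * x - D) = w * x ^ 2 + w * E * x - D * w := by ring
      rw [h2, hwE, one_mul] at h
      exact h
    have : G * -(μt * w * x) * -(μt * w * x) + G * (μt ^ 2 * w * (x - D * w))
        = G * (μt ^ 2 * w) * (w * x ^ 2 + x - D * w) := by ring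
    rw [this]
    exact mul_pos (mul_pos he (mul_pos (pow_pos hμ 2) hwpos)) hsum
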